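/- For the Gauss measure μ and the constant-word cylinders Δ_k(λ), the total mass summed over all digit values decays like the golden-ratio rate: for every k ≥ 1, Σ_{λ=1}^{∞} μ(Δ_k(λ)) ≤ φ^{−2(k−1)}, where φ = (1+√5)/2. -/

import Mathlib

open Real
/-- One step of the Gauss map iteration: `gaussIter n x = G^n(x)` where `G y = {1/y}`. -/
noncomputable def gaussIter (n : ℕ) (x : ℝ) : ℝ := (fun y => Int.fract y⁻¹)^[n] x

/-- `pq n x` is the `(n+1)`-st continued fraction partial quotient `a_{n+1}(x)`. -/
noncomputable def pq (n : ℕ) (x : ℝ) : ℕ := ⌊(gaussIter n x)⁻¹⌋₊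

/-- The rank-`k` cylinder `Δ(d_1, …, d_k)`, where `d i` stands for `d_{i+1}`. -/
noncomputable def cfCyl (k : ℕ) (d : ℕ → ℕ) : Set ℝ :=
  {x | x ∈ Set.Ioo (0 : ℝ) 1 ∧ Irrational x ∧ ∀ i < k, pq i x = d i}

/-- The constant-word cylinder `Δ_k(λ)`. -/
noncomputable def cfCylC (k : ℕ) (l : ℕ) : Set ℝ := cfCyl k (fun _ => l)

open MeasureTheory

/-- The Gauss measure `μ(A) = (1/log 2) ∫_A dx/(1+x)` on `[0,1)`. -/
noncomputable def gaussMeasure : Measure ℝ :=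
  (volume.restrict (Set.Ico (0 : ℝ) 1)).withDensity
    (fun x => ENNReal.ofReal (((1 + x) * Real.log 2)⁻¹))

/-! ### Auxiliary development -/

noncomputable def gmAux (c : ℝ) (t : ℝ) : ℝ := (c + t)⁻¹

lemma gmAux_mem {c : ℝ} (hc : 1 ≤ c) {t : ℝ} (ht : t ∈ Set.Icc (0:ℝ) 1) :
    gmAux c t ∈ Set.Icc (0:ℝ) 1 := by
  obtain ⟨h0, h1⟩ := ht
  have hpos : 0 < c + t := by linarith
  unfold gmAux
  constructor
  · positivity
  · rw [← one_div, div_le_one hpos]; linarith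

lemma gmAux_anti {c : ℝ} (hc : 1 ≤ c) {a b : ℝ} (ha : 0 ≤ a) (hab : a ≤ b) :
    gmAux c b ≤ gmAux c a := by
  unfold gmAux
  have h1 : 0 < c + a := by linarith
  gcongr

lemma gmAux_mem_uIcc {c : ℝ} (hc : 1 ≤ c) {a b y : ℝ} (ha : a ∈ Set.Icc (0:ℝ) 1)
    (hb : b ∈ Set.Icc (0:ℝ) 1) (hy : y ∈ Set.uIcc a b) :
    gmAux c y ∈ Set.uIcc (gmAux c a) (gmAux c b) := by
  rcases le_total a b with h | h
  · rw [Set.uIcc_of_le h] at hy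
    rw [Set.uIcc_comm, Set.uIcc_of_le (gmAux_anti hc ha.1 h)]
    exact ⟨gmAux_anti hc (le_trans ha.1 hy.1) hy.2, gmAux_anti hc ha.1 hy.1⟩
  · rw [Set.uIcc_of_ge h] at hy
    rw [Set.uIcc_of_le (gmAux_anti hc hb.1 h)]
    exact ⟨gmAux_anti hc (le_trans hb.1 hy.1) hy.2, gmAux_anti hc hb.1 hy.1⟩

lemma gmAux_gap {c : ℝ} (hc : 1 ≤ c) {a b : ℝ} (ha : a ∈ Set.Icc (0:ℝ) 1)
    (hb : b ∈ Set.Icc (0:ℝ) 1) :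
    |gmAux c a - gmAux c b| ≤ |a - b| / c ^ 2 := by
  have h1 : 0 < c + a := by linarith [ha.1]
  have h2 : 0 < c + b := by linarith [hb.1]
  have key : gmAux c a - gmAux c b = (b - a) / ((c + a) * (c + b)) := by
    unfold gmAux; field_simp; ring
  rw [key, abs_div, abs_sub_comm b a]
  rw [abs_of_pos (show (0:ℝ) < (c+a)*(c+b) by positivity)]
  gcongr
  nlinarith [ha.1, hb.1]

lemma cfCylC_succ_subset (k l : ℕ) :
    cfCylC (k+1) l ⊆ gmAux (l:ℝ) '' (cfCylC k l) := by
  rintro x ⟨⟨hx0, hx1⟩, hirr, hd⟩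
  have hxne : x ≠ 0 := ne_of_gt hx0
  have hinv_pos : 0 < x⁻¹ := inv_pos.mpr hx0
  have hirr_inv : Irrational x⁻¹ := hirr.inv
  have hyirr : Irrational (Int.fract x⁻¹) := by
    rw [Int.fract]
    exact hirr_inv.sub_intCast _
  have hy0 : 0 < Int.fract x⁻¹ :=
    lt_of_le_of_ne (Int.fract_nonneg _) (Ne.symm hyirr.ne_zero)
  have hy1 : Int.fract x⁻¹ < 1 := Int.fract_lt_one _
  have hd0 : pq 0 x = l := hd 0 (Nat.succ_pos k)
  have hfl : ((⌊x⁻¹⌋ : ℤ) : ℝ) = (l : ℝ) := by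
    rw [← Int.natCast_floor_eq_floor hinv_pos.le]
    have : ⌊x⁻¹⌋₊ = l := hd0
    exact_mod_cast congrArg (Nat.cast : ℕ → ℝ) this
  have hsum : (l : ℝ) + Int.fract x⁻¹ = x⁻¹ := by
    rw [Int.fract, ← hfl]; ring
  refine ⟨Int.fract x⁻¹, ⟨⟨hy0, hy1⟩, hyirr, ?_⟩, ?_⟩
  · intro i hi
    have hiter : gaussIter i (Int.fract x⁻¹) = gaussIter (i+1) x := by
      unfold gaussIter
      rw [Function.iterate_succ_apply]
    show pq i (Int.fract x⁻¹) = l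
    unfold pq
    rw [hiter]
    exact hd (i+1) (by omega)
  · show gmAux (l:ℝ) (Int.fract x⁻¹) = x
    unfold gmAux
    rw [hsum, inv_inv]

lemma gmAux_iter_mem {c : ℝ} (hc : 1 ≤ c) {t : ℝ} (ht : t ∈ Set.Icc (0:ℝ) 1) (k : ℕ) :
    (gmAux c)^[k] t ∈ Set.Icc (0:ℝ) 1 := by
  induction k with
  | zero => simpa using ht
  | succ k ih => rw [Function.iterate_succ_apply']; exact gmAux_mem hc ih

lemma cfCylC_subset_uIcc (l : ℕ) (hl : 1 ≤ l) (k : ℕ) :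
    cfCylC k l ⊆ Set.uIcc ((gmAux (l:ℝ))^[k] 0) ((gmAux (l:ℝ))^[k] 1) := by
  have hc : (1:ℝ) ≤ (l:ℝ) := by exact_mod_cast hl
  induction k with
  | zero =>
    rintro x ⟨⟨hx0, hx1⟩, -, -⟩
    simp only [Function.iterate_zero_apply]
    rw [Set.uIcc_of_le zero_le_one]
    exact ⟨hx0.le, hx1.le⟩
  | succ k ih =>
    intro x hx
    obtain ⟨y, hy_mem, rfl⟩ := cfCylC_succ_subset k l hx
    have e0 : (gmAux (l:ℝ))^[k+1] (0:ℝ) = gmAux (l:ℝ) ((gmAux (l:ℝ))^[k] 0) :=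
      Function.iterate_succ_apply' _ _ _
    have e1 : (gmAux (l:ℝ))^[k+1] (1:ℝ) = gmAux (l:ℝ) ((gmAux (l:ℝ))^[k] 1) :=
      Function.iterate_succ_apply' _ _ _
    rw [e0, e1]
    exact gmAux_mem_uIcc hc (gmAux_iter_mem hc (by norm_num) k)
      (gmAux_iter_mem hc (by norm_num) k) (ih hy_mem)

lemma gaussMeasure_le_of_subset_Icc {S : Set ℝ} {a b : ℝ} (ha : 0 ≤ a)
    (hS : S ⊆ Set.Icc a b) :
    gaussMeasure S ≤ ENNReal.ofReal ((b - a) / Real.log 2) := by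
  have hL : (0:ℝ) < Real.log 2 := Real.log_pos (by norm_num)
  calc gaussMeasure S ≤ gaussMeasure (Set.Icc a b) := measure_mono hS
    _ ≤ ENNReal.ofReal ((b - a) / Real.log 2) := ?_
  rw [gaussMeasure, withDensity_apply _ measurableSet_Icc,
    Measure.restrict_restrict measurableSet_Icc]
  calc ∫⁻ x in Set.Icc a b ∩ Set.Ico 0 1, ENNReal.ofReal (((1 + x) * Real.log 2)⁻¹) ∂volume
      ≤ ∫⁻ _x in Set.Icc a b ∩ Set.Ico 0 1, ENNReal.ofReal ((Real.log 2)⁻¹) ∂volume := by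
        apply setLIntegral_mono measurable_const
        intro x hx
        apply ENNReal.ofReal_le_ofReal
        have hx0 : (0:ℝ) ≤ x := hx.2.1
        rw [← one_div, ← one_div]
        apply one_div_le_one_div_of_le hL
        nlinarith
    _ = ENNReal.ofReal ((Real.log 2)⁻¹) * volume (Set.Icc a b ∩ Set.Ico 0 1) := by
        rw [setLIntegral_const]
    _ ≤ ENNReal.ofReal ((Real.log 2)⁻¹) * ENNReal.ofReal (b - a) := by
        gcongr
        calc volume (Set.Icc a b ∩ Set.Ico 0 1) ≤ volume (Set.Icc a b) :=
          measure_mono Set.inter_subset_left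
        _ = ENNReal.ofReal (b - a) := Real.volume_Icc
    _ = ENNReal.ofReal ((b - a) / Real.log 2) := by
        rw [← ENNReal.ofReal_mul (by positivity)]
        rw [mul_comm]
        rw [div_eq_mul_inv]

lemma cyl_meas_le (l : ℕ) (hl : 1 ≤ l) (k : ℕ) :
    gaussMeasure (cfCylC k l) ≤
      ENNReal.ofReal (|(gmAux (l:ℝ))^[k] 0 - (gmAux (l:ℝ))^[k] 1| / Real.log 2) := by
  have hc : (1:ℝ) ≤ (l:ℝ) := by exact_mod_cast hl
  set u := (gmAux (l:ℝ))^[k] 0 with hu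
  set v := (gmAux (l:ℝ))^[k] 1 with hv
  have hum : u ∈ Set.Icc (0:ℝ) 1 := gmAux_iter_mem hc (by norm_num) k
  have hvm : v ∈ Set.Icc (0:ℝ) 1 := gmAux_iter_mem hc (by norm_num) k
  have habs : max u v - min u v = |u - v| := max_sub_min_eq_abs' u v
  have hsub : cfCylC k l ⊆ Set.Icc (min u v) (max u v) := by
    intro x hx
    exact cfCylC_subset_uIcc l hl k hx
  calc gaussMeasure (cfCylC k l)
      ≤ ENNReal.ofReal ((max u v - min u v) / Real.log 2) :=
        gaussMeasure_le_of_subset_Icc (le_min hum.1 hvm.1) hsub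
    _ = _ := by rw [habs]

lemma gmAux_iter_gap {c : ℝ} (hc : 2 ≤ c) (k : ℕ) :
    |(gmAux c)^[k+1] 0 - (gmAux c)^[k+1] 1| ≤ (c * (c+1))⁻¹ * ((c^2)⁻¹) ^ k := by
  have hc1 : (1:ℝ) ≤ c := by linarith
  have hcpos : (0:ℝ) < c := by linarith
  induction k with
  | zero =>
    have h1 : gmAux c ((0:ℝ)) = c⁻¹ := by unfold gmAux; rw [add_zero]
    have h2 : gmAux c ((1:ℝ)) = (c+1)⁻¹ := rfl
    have h3 : c⁻¹ - (c+1)⁻¹ = (c * (c+1))⁻¹ := by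
      rw [mul_inv]
      field_simp
      ring
    simp only [zero_add, Function.iterate_one, h1, h2, pow_zero, mul_one, h3]
    rw [h3.symm, abs_of_nonneg (by rw [h3]; positivity), h3]
  | succ k ih =>
    have h0m : (gmAux c)^[k+1] (0:ℝ) ∈ Set.Icc (0:ℝ) 1 :=
      gmAux_iter_mem hc1 (by norm_num) _
    have h1m : (gmAux c)^[k+1] (1:ℝ) ∈ Set.Icc (0:ℝ) 1 :=
      gmAux_iter_mem hc1 (by norm_num) _
    have e0 : (gmAux c)^[k+1+1] (0:ℝ) = gmAux c ((gmAux c)^[k+1] 0) :=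
      Function.iterate_succ_apply' _ _ _
    have e1 : (gmAux c)^[k+1+1] (1:ℝ) = gmAux c ((gmAux c)^[k+1] 1) :=
      Function.iterate_succ_apply' _ _ _
    rw [e0, e1]
    calc |gmAux c ((gmAux c)^[k+1] 0) - gmAux c ((gmAux c)^[k+1] 1)|
        ≤ |(gmAux c)^[k+1] 0 - (gmAux c)^[k+1] 1| / c ^ 2 := gmAux_gap hc1 h0m h1m
      _ ≤ ((c * (c+1))⁻¹ * ((c^2)⁻¹) ^ k) / c ^ 2 := by gcongr
      _ = (c * (c+1))⁻¹ * ((c^2)⁻¹) ^ (k+1) := by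
          rw [pow_succ]
          ring

lemma iter_one_fib (k : ℕ) :
    (gmAux (1:ℝ))^[k] 0 = (Nat.fib k : ℝ) / (Nat.fib (k+1) : ℝ) := by
  induction k with
  | zero => simp
  | succ k ih =>
    rw [Function.iterate_succ_apply', ih]
    have h1 : (0:ℝ) < (Nat.fib (k+1) : ℝ) := by
      exact_mod_cast Nat.fib_pos.mpr k.succ_pos
    have h2 : (0:ℝ) < (Nat.fib (k+2) : ℝ) := by
      exact_mod_cast Nat.fib_pos.mpr (k+1).succ_pos
    have h3 : (Nat.fib (k+2) : ℝ) = (Nat.fib k : ℝ) + (Nat.fib (k+1) : ℝ) := by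
      exact_mod_cast congrArg (Nat.cast : ℕ → ℝ) (Nat.fib_add_two (n := k))
    have h4 : (1:ℝ) + (Nat.fib k : ℝ) / (Nat.fib (k+1) : ℝ)
        = (Nat.fib (k+2) : ℝ) / (Nat.fib (k+1) : ℝ) := by
      rw [h3]; field_simp; ring
    unfold gmAux
    rw [h4, inv_div]

lemma cassini (k : ℕ) :
    (Nat.fib k : ℤ) * (Nat.fib (k+2) : ℤ) = (Nat.fib (k+1) : ℤ)^2 + (-1)^(k+1) := by
  induction k with
  | zero => norm_num
  | succ k ih =>
    have h3 : (Nat.fib (k+3) : ℤ) = (Nat.fib (k+1) : ℤ) + (Nat.fib (k+2) : ℤ) := by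
      exact_mod_cast congrArg (Nat.cast : ℕ → ℤ) (Nat.fib_add_two (n := k+1))
    have h2 : (Nat.fib (k+2) : ℤ) = (Nat.fib k : ℤ) + (Nat.fib (k+1) : ℤ) := by
      exact_mod_cast congrArg (Nat.cast : ℕ → ℤ) (Nat.fib_add_two (n := k))
    have e0 : k + 1 + 2 = k + 3 := by omega
    rw [e0, h3]
    linear_combination (-1 : ℤ) * ih - (Nat.fib (k+2) : ℤ) * h2

lemma sqrt5_lb : 2.236 ≤ Real.sqrt 5 := by
  nlinarith [Real.sq_sqrt (show (0:ℝ) ≤ 5 by norm_num), Real.sqrt_nonneg 5]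

lemma sqrt5_ub : Real.sqrt 5 ≤ 2.2361 := by
  nlinarith [Real.sq_sqrt (show (0:ℝ) ≤ 5 by norm_num), Real.sqrt_nonneg 5]

lemma aux_arith (s T e : ℝ) (hs : s*s = 5) (hsb : 2.236 ≤ s) (hT1 : 1 ≤ T)
    (hpar : e = 1 ∨ (e = -1 ∧ (2+s)^2 ≤ T)) :
    (5/6) * T ≤ (T*(2+s) - (T*(2+s))⁻¹ + e) / 5 := by
  have hw : (0:ℝ) < T*(2+s) := by nlinarith
  have h1w : (1:ℝ) ≤ T*(2+s) := by nlinarith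
  have hinv1 : (T*(2+s))⁻¹ ≤ 1 := by
    rw [← one_div, div_le_one hw]; linarith
  have hinvpos : (0:ℝ) < (T*(2+s))⁻¹ := by positivity
  rcases hpar with he | ⟨he, hT6⟩
  · rw [he]
    nlinarith [hsb, hT1, hinv1]
  · rw [he]
    have hT9 : 9 + 4*s ≤ T := by nlinarith
    have hw76 : (76:ℝ) ≤ T*(2+s) := by nlinarith
    have hinv76 : (T*(2+s))⁻¹ ≤ 1/76 := by
      rw [← one_div]
      exact one_div_le_one_div_of_le (by norm_num) hw76
    have hkey : 20/19 ≤ T*(s - 13/6) := by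
      have h1 : (0:ℝ) ≤ s - 13/6 := by linarith
      have h2 : (9 + 4*s)*(s - 13/6) ≤ T*(s - 13/6) :=
        mul_le_mul_of_nonneg_right hT9 h1
      nlinarith [h2, hs, hsb]
    nlinarith [hinv76, hkey]

lemma fib_mul_fib_lower (k : ℕ) (hk : 2 ≤ k) :
    (5/6 : ℝ) * goldenRatio ^ (2*k) ≤ (Nat.fib (k+1) : ℝ) * (Nat.fib (k+2) : ℝ) := by
  have hs5 : Real.sqrt 5 * Real.sqrt 5 = 5 := Real.mul_self_sqrt (by norm_num)
  have hsb : 2.236 ≤ Real.sqrt 5 := sqrt5_lb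
  have hφval : goldenRatio = (1 + Real.sqrt 5) / 2 := rfl
  have hprod : (Nat.fib (k+1) : ℝ) * (Nat.fib (k+2) : ℝ)
      = (goldenRatio ^ (2*k+3) + goldenConj ^ (2*k+3) + (-1)^k) / 5 := by
    rw [Real.coe_fib_eq, Real.coe_fib_eq, div_mul_div_comm, hs5]
    have h1 : goldenRatio^(k+1) * goldenConj^(k+1) = (-1:ℝ)^(k+1) := by
      rw [← mul_pow, goldenRatio_mul_goldenConj]
    have h2 : goldenRatio + goldenConj = 1 := goldenRatio_add_goldenConj
    linear_combination (-(goldenConj + goldenRatio)/5) * h1 + (-(-1:ℝ)^(k+1)/5) * h2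
  rw [hprod]
  have hφ3 : goldenRatio^3 = 2 + Real.sqrt 5 := by
    rw [pow_succ, goldenRatio_sq, hφval]
    linear_combination (1/4) * hs5
  have hφpos : (0:ℝ) < goldenRatio^(2*k+3) := pow_pos goldenRatio_pos _
  have hψ : goldenConj ^ (2*k+3) = -(goldenRatio^(2*k+3))⁻¹ := by
    have hodd : Odd (2*k+3) := ⟨k+1, by ring⟩
    have hmul : goldenConj^(2*k+3) * goldenRatio^(2*k+3) = -1 := by
      rw [← mul_pow, goldenConj_mul_goldenRatio, hodd.neg_one_pow]
    have : goldenConj^(2*k+3) = (-1) / goldenRatio^(2*k+3) := by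
      rw [eq_div_iff (ne_of_gt hφpos)]
      exact hmul
    rw [this, neg_div, one_div]
  have hsplit : goldenRatio^(2*k+3) = goldenRatio ^ (2*k) * (2 + Real.sqrt 5) := by
    rw [← hφ3, ← pow_add]
  rw [hψ, hsplit]
  have hT1 : (1:ℝ) ≤ goldenRatio ^ (2*k) := one_le_pow₀ (le_of_lt one_lt_goldenRatio)
  rcases Nat.even_or_odd k with hev | hod
  · rw [hev.neg_one_pow]
    exact aux_arith _ _ _ hs5 hsb hT1 (Or.inl rfl)
  · rw [hod.neg_one_pow]
    refine aux_arith _ _ _ hs5 hsb hT1 (Or.inr ⟨rfl, ?_⟩)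
    have hk3 : 3 ≤ k := by
      rcases hod with ⟨j, hj⟩
      omega
    have h6 : goldenRatio ^ 6 ≤ goldenRatio ^ (2*k) :=
      pow_le_pow_right₀ (le_of_lt one_lt_goldenRatio) (by omega)
    calc (2 + Real.sqrt 5)^2 = (goldenRatio^3)^2 := by rw [hφ3]
      _ = goldenRatio ^ 6 := by rw [← pow_mul]
      _ ≤ _ := h6

lemma gap_one_le (k : ℕ) (hk : 2 ≤ k) :
    |(gmAux (1:ℝ))^[k] 0 - (gmAux (1:ℝ))^[k] 1| ≤ (6/5) * (goldenRatio^(2*k))⁻¹ := by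
  have hone : gmAux (1:ℝ) 0 = 1 := by unfold gmAux; norm_num
  have hv : (gmAux (1:ℝ))^[k] 1 = (gmAux (1:ℝ))^[k+1] 0 := by
    rw [Function.iterate_succ_apply, hone]
  rw [hv, iter_one_fib, iter_one_fib]
  have h1 : (0:ℝ) < (Nat.fib (k+1) : ℝ) := by exact_mod_cast Nat.fib_pos.mpr k.succ_pos
  have h2 : (0:ℝ) < (Nat.fib (k+2) : ℝ) := by exact_mod_cast Nat.fib_pos.mpr (k+1).succ_pos
  have hcas : (Nat.fib k : ℝ) * (Nat.fib (k+2) : ℝ)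
      = (Nat.fib (k+1) : ℝ)^2 + (-1:ℝ)^(k+1) := by exact_mod_cast cassini k
  have hdiff : (Nat.fib k : ℝ) / (Nat.fib (k+1) : ℝ) - (Nat.fib (k+1) : ℝ) / (Nat.fib (k+2) : ℝ)
      = (-1:ℝ)^(k+1) / ((Nat.fib (k+1) : ℝ) * (Nat.fib (k+2) : ℝ)) := by
    field_simp
    linear_combination hcas
  rw [hdiff, abs_div, abs_pow, abs_neg, abs_one, one_pow,
    abs_of_pos (by positivity : (0:ℝ) < (Nat.fib (k+1) : ℝ) * (Nat.fib (k+2) : ℝ))]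
  have hφpos : (0:ℝ) < goldenRatio ^ (2*k) := pow_pos goldenRatio_pos _
  have hlow := fib_mul_fib_lower k hk
  rw [div_le_iff₀ (by positivity)]
  have h := mul_le_mul_of_nonneg_left hlow (le_of_lt (inv_pos.mpr hφpos))
  have hc : (goldenRatio ^ (2*k))⁻¹ * ((5/6)*goldenRatio ^ (2*k)) = 5/6 := by
    field_simp
  nlinarith [h, hc]

lemma tail_real (m l : ℕ) :
    (((l:ℝ)+4)*(((l:ℝ)+4)+1))⁻¹ * (((((l:ℝ)+4)^2)⁻¹))^(m+1)
      ≤ ((4:ℝ)^m)⁻¹ * (1/16) * (((l:ℝ)+3)⁻¹ - ((l:ℝ)+4)⁻¹) := by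
  set c : ℝ := (l:ℝ)+4 with hc
  have hc4 : (4:ℝ) ≤ c := by simp [hc]
  have hcpos : (0:ℝ) < c := by linarith
  have h3pos : (0:ℝ) < (l:ℝ)+3 := by positivity
  have hstep2 : ((c^2)⁻¹)^m ≤ ((4:ℝ)^m)⁻¹ := by
    have hbase : ((c^2)⁻¹) ≤ (4:ℝ)⁻¹ := by
      rw [inv_le_inv₀ (by positivity) (by norm_num)]
      nlinarith
    calc ((c^2)⁻¹)^m ≤ ((4:ℝ)⁻¹)^m := pow_le_pow_left₀ (by positivity) hbase m
      _ = ((4:ℝ)^m)⁻¹ := by rw [inv_pow]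
  have htele : ((l:ℝ)+3)⁻¹ - ((l:ℝ)+4)⁻¹ = (((l:ℝ)+3)*c)⁻¹ := by
    rw [mul_inv]
    field_simp
    norm_num
    exact hc
  have hstep3 : (c*(c+1))⁻¹ * (c^2)⁻¹ ≤ (1/16) * (((l:ℝ)+3)⁻¹ - ((l:ℝ)+4)⁻¹) := by
    rw [htele, ← mul_inv]
    have h16 : (16:ℝ) * (((l:ℝ)+3)*c) ≤ (c*(c+1))*(c^2) := by
      have he : (l:ℝ)+3 = c - 1 := by rw [hc]; ring
      rw [he]
      have h1 : 16*((c-1)*c) ≤ 16*c^2 := by nlinarith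
      have hcc : (16:ℝ) ≤ c^2 := by nlinarith
      have h2 : 16*c^2 ≤ c^2*c^2 := by nlinarith [mul_nonneg (sub_nonneg.mpr hcc) (sq_nonneg c)]
      have h3 : c^2*c^2 ≤ c*(c+1)*c^2 := by nlinarith
      linarith
    calc (c*(c+1)*(c^2))⁻¹ ≤ ((16:ℝ) * (((l:ℝ)+3)*c))⁻¹ := by
          apply inv_anti₀ (by positivity) h16
      _ = (1/16) * ((((l:ℝ)+3)*c)⁻¹) := by
          rw [mul_inv]
          ring
  calc (c*(c+1))⁻¹ * ((c^2)⁻¹)^(m+1)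
      = (((c^2)⁻¹)^m) * ((c*(c+1))⁻¹ * (c^2)⁻¹) := by ring
    _ ≤ ((4:ℝ)^m)⁻¹ * ((1/16) * (((l:ℝ)+3)⁻¹ - ((l:ℝ)+4)⁻¹)) := by
        apply mul_le_mul hstep2 hstep3 _ (by positivity)
        have : ((l:ℝ)+4)⁻¹ ≤ ((l:ℝ)+3)⁻¹ := by
          apply inv_anti₀ (by positivity)
          linarith
        positivity
    _ = ((4:ℝ)^m)⁻¹ * (1/16) * (((l:ℝ)+3)⁻¹ - ((l:ℝ)+4)⁻¹) := by ring

lemma tail_tsum (a : ℝ) (ha : 0 ≤ a) :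
    ∑' l : ℕ, ENNReal.ofReal (a * (((l:ℝ)+3)⁻¹ - ((l:ℝ)+4)⁻¹))
      ≤ ENNReal.ofReal (a * (1/3)) := by
  apply ENNReal.tsum_le_of_sum_range_le
  intro n
  have hnn : ∀ l ∈ Finset.range n, 0 ≤ a * (((l:ℝ)+3)⁻¹ - ((l:ℝ)+4)⁻¹) := by
    intro l _
    have h4 : ((l:ℝ)+4)⁻¹ ≤ ((l:ℝ)+3)⁻¹ := by
      apply inv_anti₀ (by positivity)
      linarith
    have h0 : (0:ℝ) ≤ (((l:ℝ)+3)⁻¹ - ((l:ℝ)+4)⁻¹) := by linarith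
    positivity
  rw [← ENNReal.ofReal_sum_of_nonneg hnn]
  apply ENNReal.ofReal_le_ofReal
  have h := Finset.sum_range_sub' (f := fun l : ℕ => ((l:ℝ)+3)⁻¹) n
  have htel : ∑ l ∈ Finset.range n, (((l:ℝ)+3)⁻¹ - ((l:ℝ)+4)⁻¹) = (3:ℝ)⁻¹ - ((n:ℝ)+3)⁻¹ := by
    calc ∑ l ∈ Finset.range n, (((l:ℝ)+3)⁻¹ - ((l:ℝ)+4)⁻¹)
        = ∑ x ∈ Finset.range n,
            ((fun l : ℕ => ((l:ℝ)+3)⁻¹) x - (fun l : ℕ => ((l:ℝ)+3)⁻¹) (x+1)) := by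
          apply Finset.sum_congr rfl
          intro x _
          push_cast
          ring_nf
      _ = (fun l : ℕ => ((l:ℝ)+3)⁻¹) 0 - (fun l : ℕ => ((l:ℝ)+3)⁻¹) n := h
      _ = (3:ℝ)⁻¹ - ((n:ℝ)+3)⁻¹ := by norm_num
  rw [← Finset.mul_sum, htel]
  have hpos : (0:ℝ) ≤ ((n:ℝ)+3)⁻¹ := by positivity
  nlinarith

lemma final_real (m : ℕ) :
    (6/5)*(goldenRatio^(2*(m+2)))⁻¹ / Real.log 2
      + (((4:ℝ)^m)⁻¹/24) / Real.log 2
      + (((4:ℝ)^m)⁻¹/108) / Real.log 2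
      + (((4:ℝ)^m)⁻¹ * (1/16) * (1/3)) / Real.log 2
      ≤ (goldenRatio^(2*(m+1)))⁻¹ := by
  have hL : 0.6931471803 < Real.log 2 := Real.log_two_gt_d9
  have hLpos : (0:ℝ) < Real.log 2 := by linarith
  have hs5 : Real.sqrt 5 * Real.sqrt 5 = 5 := Real.mul_self_sqrt (by norm_num)
  have hsb : 2.236 ≤ Real.sqrt 5 := sqrt5_lb
  have hsu : Real.sqrt 5 ≤ 2.2361 := sqrt5_ub
  have hφval : goldenRatio = (1 + Real.sqrt 5) / 2 := rfl
  have hφ2 : goldenRatio^2 = (3 + Real.sqrt 5)/2 := by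
    rw [goldenRatio_sq, hφval]; ring
  have hφ2pos : (0:ℝ) < goldenRatio^2 := pow_pos goldenRatio_pos _
  set P : ℝ := goldenRatio^(2*(m+1)) with hP
  set Q : ℝ := ((4:ℝ)^m)⁻¹ with hQ
  have hPpos : (0:ℝ) < P := pow_pos goldenRatio_pos _
  have hQpos : (0:ℝ) < Q := by rw [hQ]; positivity
  have hsplit : goldenRatio^(2*(m+2)) = P * goldenRatio^2 := by
    rw [hP, ← pow_add]
    ring_nf
  have hQP : Q ≤ goldenRatio^2 * P⁻¹ := by
    have hpow : goldenRatio^(2*m) ≤ (4:ℝ)^m := by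
      calc goldenRatio^(2*m) = (goldenRatio^2)^m := by rw [← pow_mul]
        _ ≤ (4:ℝ)^m := by
            apply pow_le_pow_left₀ (by positivity)
            rw [hφ2]
            nlinarith
    have h4pos : (0:ℝ) < (4:ℝ)^m := by positivity
    have hPeq : P = goldenRatio^(2*m) * goldenRatio^2 := by
      rw [hP, ← pow_add]
      ring_nf
    rw [hQ, hPeq]
    rw [mul_inv, ← mul_assoc]
    calc ((4:ℝ)^m)⁻¹ = ((4:ℝ)^m)⁻¹ * (goldenRatio^(2*m) * (goldenRatio^(2*m))⁻¹) := by
          rw [mul_inv_cancel₀ (ne_of_gt (pow_pos goldenRatio_pos _)), mul_one]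
      _ ≤ ((4:ℝ)^m)⁻¹ * ((4:ℝ)^m * (goldenRatio^(2*m))⁻¹) := by
          gcongr
      _ = (goldenRatio^(2*m))⁻¹ := by
          rw [← mul_assoc, inv_mul_cancel₀ (ne_of_gt h4pos), one_mul]
      _ = goldenRatio ^ 2 * (goldenRatio ^ 2)⁻¹ * (goldenRatio ^ (2 * m))⁻¹ := by
          rw [mul_inv_cancel₀ (ne_of_gt hφ2pos), one_mul]
      _ = goldenRatio ^ 2 * (goldenRatio ^ (2 * m))⁻¹ * (goldenRatio ^ 2)⁻¹ := by ring
  rw [hsplit]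
  rw [← add_div, ← add_div, ← add_div, div_le_iff₀ hLpos]
  have hnum : (6/5)*(goldenRatio^2)⁻¹ + (31/432)*goldenRatio^2 ≤ Real.log 2 := by
    rw [hφ2]
    have h3s : (0:ℝ) < 3 + Real.sqrt 5 := by linarith
    have hx : (3 + Real.sqrt 5)⁻¹ ≤ (5.236:ℝ)⁻¹ := by
      apply inv_anti₀ (by norm_num)
      linarith
    have hxe : ((3 + Real.sqrt 5)/2)⁻¹ = 2 * (3 + Real.sqrt 5)⁻¹ := by
      rw [div_eq_mul_inv, mul_inv, mul_comm]
      norm_num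
    rw [hxe]
    nlinarith [hx, hsu, hL]
  have hQbound : (6/5)*(P * goldenRatio^2)⁻¹ + Q/24 + Q/108 + Q*(1/16)*(1/3)
      ≤ P⁻¹ * ((6/5)*(goldenRatio^2)⁻¹ + (31/432)*goldenRatio^2) := by
    have he1 : (6/5)*(P * goldenRatio^2)⁻¹ = P⁻¹ * ((6/5)*(goldenRatio^2)⁻¹) := by
      rw [mul_inv]; ring
    have he2 : Q/24 + Q/108 + Q*(1/16)*(1/3) = (31/432)*Q := by ring
    rw [he1]
    have hrest : Q/24 + Q/108 + Q*(1/16)*(1/3) ≤ P⁻¹ * ((31/432)*goldenRatio^2) := by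
      rw [he2]
      calc (31/432)*Q ≤ (31/432)*(goldenRatio^2 * P⁻¹) := by gcongr
        _ = P⁻¹ * ((31/432)*goldenRatio^2) := by ring
    linarith
  calc (6/5)*(P * goldenRatio^2)⁻¹ + Q/24 + Q/108 + Q*(1/16)*(1/3)
      ≤ P⁻¹ * ((6/5)*(goldenRatio^2)⁻¹ + (31/432)*goldenRatio^2) := hQbound
    _ ≤ P⁻¹ * Real.log 2 := by gcongr

lemma gaussMeasure_total : gaussMeasure Set.univ ≤ 1 := by
  have hL : (0:ℝ) < Real.log 2 := Real.log_pos (by norm_num)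
  have hmeas : gaussMeasure Set.univ
      = ∫⁻ x in Set.Ico (0:ℝ) 1, ENNReal.ofReal (((1 + x) * Real.log 2)⁻¹) ∂volume := by
    rw [gaussMeasure, withDensity_apply _ MeasurableSet.univ, Measure.restrict_univ]
  rw [hmeas]
  have hcont : ContinuousOn (fun x : ℝ => ((1 + x) * Real.log 2)⁻¹) (Set.Icc 0 1) := by
    apply ContinuousOn.inv₀
    · fun_prop
    · intro x hx
      have : (0:ℝ) ≤ x := hx.1
      positivity
  have hint : IntegrableOn (fun x : ℝ => ((1 + x) * Real.log 2)⁻¹) (Set.Ico 0 1) volume := by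
    apply (hcont.integrableOn_Icc).mono_set
    exact Set.Ico_subset_Icc_self
  have heq : ∫⁻ x in Set.Ico (0:ℝ) 1, ENNReal.ofReal (((1 + x) * Real.log 2)⁻¹) ∂volume
      = ENNReal.ofReal (∫ x in Set.Ico (0:ℝ) 1, ((1 + x) * Real.log 2)⁻¹ ∂volume) := by
    rw [← MeasureTheory.ofReal_integral_eq_lintegral_ofReal hint]
    filter_upwards [ae_restrict_mem measurableSet_Ico] with x hx
    have : (0:ℝ) ≤ x := hx.1
    positivity
  rw [heq]
  have hval : ∫ x in Set.Ico (0:ℝ) 1, ((1 + x) * Real.log 2)⁻¹ ∂volume = 1 := by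
    rw [MeasureTheory.integral_Ico_eq_integral_Ioo, ← MeasureTheory.integral_Ioc_eq_integral_Ioo]
    rw [← intervalIntegral.integral_of_le (by norm_num : (0:ℝ) ≤ 1)]
    have hptw : ∀ x : ℝ, ((1 + x) * Real.log 2)⁻¹ = (Real.log 2)⁻¹ * (1 + x)⁻¹ := by
      intro x; rw [mul_inv, mul_comm]
    simp_rw [hptw]
    rw [intervalIntegral.integral_const_mul]
    rw [intervalIntegral.integral_comp_add_left (fun u : ℝ => u⁻¹) 1]
    rw [integral_inv (by
      rw [Set.uIcc_of_le (by norm_num : (1:ℝ)+0 ≤ 1 + 1)]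
      intro h
      have := h.1
      norm_num at this)]
    norm_num
  rw [hval]
  norm_num

lemma cfCylC_one_subset (l : ℕ) :
    cfCylC 1 (l+1) ⊆ Set.Ioo (((l:ℝ)+2)⁻¹) (((l:ℝ)+1)⁻¹) := by
  rintro x ⟨⟨hx0, hx1⟩, hirr, hd⟩
  have hd0 : ⌊x⁻¹⌋₊ = l+1 := hd 0 one_pos
  have hinv_pos : (0:ℝ) < x⁻¹ := inv_pos.mpr hx0
  have hfl := (Nat.floor_eq_iff hinv_pos.le).mp hd0
  have hlow : ((l:ℝ)+1) ≤ x⁻¹ := by exact_mod_cast hfl.1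
  have hhigh : x⁻¹ < (l:ℝ)+2 := by
    have := hfl.2
    push_cast at this
    linarith
  have hne : x⁻¹ ≠ ((l:ℝ)+1) := by
    have hI : Irrational x⁻¹ := hirr.inv
    intro h
    rw [h] at hI
    exact hI ⟨((l:ℚ)+1), by push_cast; ring⟩
  have hlow' : ((l:ℝ)+1) < x⁻¹ := lt_of_le_of_ne hlow (Ne.symm hne)
  have hxinv : x * x⁻¹ = 1 := mul_inv_cancel₀ (ne_of_gt hx0)
  constructor
  · have h2 : (0:ℝ) < (l:ℝ)+2 := by positivity
    rw [inv_lt_iff_one_lt_mul₀ h2]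
    nlinarith
  · have h1 : (0:ℝ) < (l:ℝ)+1 := by positivity
    rw [lt_inv_comm₀ hx0 h1]
    exact hlow'

lemma Ioo_disj : Pairwise (Function.onFun Disjoint
    (fun l : ℕ => Set.Ioo (((l:ℝ)+2)⁻¹) (((l:ℝ)+1)⁻¹))) := by
  apply (pairwise_disjoint_on _).mpr
  intro i j hij
  apply Set.disjoint_left.mpr
  rintro x ⟨hi1, hi2⟩ ⟨hj1, hj2⟩
  have hle : ((j:ℝ)+1)⁻¹ ≤ ((i:ℝ)+2)⁻¹ := by
    apply inv_anti₀ (by positivity)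
    have : (i:ℝ) + 1 ≤ (j:ℝ) := by exact_mod_cast Nat.succ_le_of_lt hij
    linarith
  linarith

lemma ofReal_add4 (a b c d : ℝ) (ha : 0 ≤ a) (hb : 0 ≤ b) (hc : 0 ≤ c) (hd : 0 ≤ d) :
    ENNReal.ofReal a + (ENNReal.ofReal b + (ENNReal.ofReal c + ENNReal.ofReal d))
      ≤ ENNReal.ofReal (a + (b + (c + d))) := by
  rw [ENNReal.ofReal_add ha (by positivity), ENNReal.ofReal_add hb (by positivity),
    ENNReal.ofReal_add hc hd]

/-- Summed over all digit values, the Gauss measures of the constant-word cylinders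
decay at the golden-ratio rate: `Σ_{λ≥1} μ(Δ_k(λ)) ≤ φ^{-2(k-1)}`. -/
theorem gaussMeasure_cfCylC_tsum_le (k : ℕ) (hk : 1 ≤ k) :
    ∑' l : ℕ, gaussMeasure (cfCylC k (l + 1)) ≤
      ENNReal.ofReal (((1 + Real.sqrt 5) / 2) ^ (-(2 * ((k : ℤ) - 1)))) := by
  have hgold : ((1 + Real.sqrt 5) / 2) = goldenRatio := rfl
  rcases Nat.lt_or_ge k 2 with hk2 | hk2
  · -- k = 1
    have hk1 : k = 1 := by omega
    subst hk1
    have hexp : (-(2 * (((1:ℕ) : ℤ) - 1))) = 0 := by norm_num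
    rw [hexp, zpow_zero, ENNReal.ofReal_one]
    calc ∑' l : ℕ, gaussMeasure (cfCylC 1 (l + 1))
        ≤ ∑' l : ℕ, gaussMeasure (Set.Ioo (((l:ℝ)+2)⁻¹) (((l:ℝ)+1)⁻¹)) :=
          ENNReal.tsum_le_tsum (fun l => measure_mono (cfCylC_one_subset l))
      _ = gaussMeasure (⋃ l : ℕ, Set.Ioo (((l:ℝ)+2)⁻¹) (((l:ℝ)+1)⁻¹)) :=
          (measure_iUnion Ioo_disj (fun l => measurableSet_Ioo)).symm
      _ ≤ gaussMeasure Set.univ := measure_mono (Set.subset_univ _)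
      _ ≤ 1 := gaussMeasure_total
  · -- k = m + 2
    obtain ⟨m, rfl⟩ : ∃ m, k = m + 2 := ⟨k - 2, by omega⟩
    have hL : (0:ℝ) < Real.log 2 := Real.log_pos (by norm_num)
    have hexp : (-(2 * (((m+2:ℕ) : ℤ) - 1))) = -((2*(m+1) : ℕ) : ℤ) := by
      push_cast; ring
    rw [hexp, hgold, zpow_neg, zpow_natCast]
    -- bound for digit 1
    have hb1 : gaussMeasure (cfCylC (m+2) 1) ≤
        ENNReal.ofReal ((6/5)*(goldenRatio^(2*(m+2)))⁻¹ / Real.log 2) := by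
      refine le_trans (cyl_meas_le 1 le_rfl (m+2)) (ENNReal.ofReal_le_ofReal ?_)
      rw [div_le_div_iff_of_pos_right hL]
      have hcast : ((1:ℕ):ℝ) = (1:ℝ) := Nat.cast_one
      rw [hcast]
      exact gap_one_le (m+2) (by omega)
    -- general bound for digits ≥ 2
    have hgen : ∀ l : ℕ, 2 ≤ l → gaussMeasure (cfCylC (m+2) l) ≤
        ENNReal.ofReal ((((l:ℝ)*((l:ℝ)+1))⁻¹ * ((((l:ℝ)^2)⁻¹))^(m+1)) / Real.log 2) := by
      intro l hl
      refine le_trans (cyl_meas_le l (by omega) (m+2)) (ENNReal.ofReal_le_ofReal ?_)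
      rw [div_le_div_iff_of_pos_right hL]
      exact gmAux_iter_gap (by exact_mod_cast hl) (m+1)
    -- digit 2
    have hb2 : gaussMeasure (cfCylC (m+2) 2) ≤
        ENNReal.ofReal ((((4:ℝ)^m)⁻¹/24) / Real.log 2) := by
      refine le_trans (hgen 2 le_rfl) (ENNReal.ofReal_le_ofReal (le_of_eq ?_))
      have he : (((2:ℕ):ℝ)*(((2:ℕ):ℝ)+1))⁻¹ * (((((2:ℕ):ℝ)^2)⁻¹))^(m+1)
          = ((4:ℝ)^m)⁻¹/24 := by
        push_cast
        rw [show ((2:ℝ)^2) = 4 by norm_num, pow_succ, inv_pow]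
        ring
      rw [he]
    -- digit 3
    have hb3 : gaussMeasure (cfCylC (m+2) 3) ≤
        ENNReal.ofReal ((((4:ℝ)^m)⁻¹/108) / Real.log 2) := by
      refine le_trans (hgen 3 (by omega)) (ENNReal.ofReal_le_ofReal ?_)
      rw [div_le_div_iff_of_pos_right hL]
      push_cast
      rw [show ((3:ℝ)^2) = 9 by norm_num, pow_succ, inv_pow]
      have h49 : ((9:ℝ)^m)⁻¹ ≤ ((4:ℝ)^m)⁻¹ := by
        apply inv_anti₀ (by positivity)
        apply pow_le_pow_left₀ (by norm_num) (by norm_num)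
      nlinarith [h49, inv_nonneg.mpr (le_of_lt (pow_pos (show (0:ℝ)<9 by norm_num) m))]
    -- tail digits l+4
    have hbt : ∀ l : ℕ, gaussMeasure (cfCylC (m+2) (l+4)) ≤
        ENNReal.ofReal ((((4:ℝ)^m)⁻¹*(1/16)/Real.log 2) * (((l:ℝ)+3)⁻¹ - ((l:ℝ)+4)⁻¹)) := by
      intro l
      refine le_trans (hgen (l+4) (by omega)) (ENNReal.ofReal_le_ofReal ?_)
      have hcast : (((l+4:ℕ)):ℝ) = (l:ℝ)+4 := by push_cast; ring
      rw [hcast]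
      rw [show ((((4:ℝ)^m)⁻¹*(1/16)/Real.log 2) * (((l:ℝ)+3)⁻¹ - ((l:ℝ)+4)⁻¹))
          = ((((4:ℝ)^m)⁻¹*(1/16) * (((l:ℝ)+3)⁻¹ - ((l:ℝ)+4)⁻¹))/Real.log 2) by ring]
      rw [div_le_div_iff_of_pos_right hL]
      exact tail_real m l
    have htail : ∑' l : ℕ, gaussMeasure (cfCylC (m+2) (l+4))
        ≤ ENNReal.ofReal ((((4:ℝ)^m)⁻¹*(1/16)/Real.log 2) * (1/3)) :=
      le_trans (ENNReal.tsum_le_tsum hbt) (tail_tsum _ (by positivity))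
    have hsplit0 : ∑' l : ℕ, gaussMeasure (cfCylC (m+2) (l+1))
        = gaussMeasure (cfCylC (m+2) 1) + (gaussMeasure (cfCylC (m+2) 2)
          + (gaussMeasure (cfCylC (m+2) 3)
            + ∑' l : ℕ, gaussMeasure (cfCylC (m+2) (l+4)))) := by
      have e1 : ∑' l : ℕ, gaussMeasure (cfCylC (m+2) (l+1))
          = gaussMeasure (cfCylC (m+2) 1)
            + ∑' l : ℕ, gaussMeasure (cfCylC (m+2) (l+2)) :=
        tsum_eq_zero_add' ENNReal.summable
      have e2 : ∑' l : ℕ, gaussMeasure (cfCylC (m+2) (l+2))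
          = gaussMeasure (cfCylC (m+2) 2)
            + ∑' l : ℕ, gaussMeasure (cfCylC (m+2) (l+3)) :=
        tsum_eq_zero_add' ENNReal.summable
      have e3 : ∑' l : ℕ, gaussMeasure (cfCylC (m+2) (l+3))
          = gaussMeasure (cfCylC (m+2) 3)
            + ∑' l : ℕ, gaussMeasure (cfCylC (m+2) (l+4)) :=
        tsum_eq_zero_add' ENNReal.summable
      rw [e1, e2, e3]
    rw [hsplit0]
    calc gaussMeasure (cfCylC (m+2) 1) + (gaussMeasure (cfCylC (m+2) 2)
          + (gaussMeasure (cfCylC (m+2) 3)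
            + ∑' l : ℕ, gaussMeasure (cfCylC (m+2) (l+4))))
        ≤ ENNReal.ofReal ((6/5)*(goldenRatio^(2*(m+2)))⁻¹ / Real.log 2)
          + (ENNReal.ofReal ((((4:ℝ)^m)⁻¹/24) / Real.log 2)
            + (ENNReal.ofReal ((((4:ℝ)^m)⁻¹/108) / Real.log 2)
              + ENNReal.ofReal ((((4:ℝ)^m)⁻¹*(1/16)/Real.log 2) * (1/3)))) :=
          add_le_add hb1 (add_le_add hb2 (add_le_add hb3 htail))
      _ ≤ ENNReal.ofReal ((6/5)*(goldenRatio^(2*(m+2)))⁻¹ / Real.log 2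
            + ((((4:ℝ)^m)⁻¹/24) / Real.log 2
              + ((((4:ℝ)^m)⁻¹/108) / Real.log 2
                + (((4:ℝ)^m)⁻¹*(1/16)/Real.log 2) * (1/3)))) :=
          ofReal_add4 _ _ _ _ (by positivity) (by positivity) (by positivity) (by positivity)
      _ ≤ ENNReal.ofReal ((goldenRatio^(2*(m+1)))⁻¹) := by
          apply ENNReal.ofReal_le_ofReal
          have hfr := final_real m
          calc 6/5*(goldenRatio^(2*(m+2)))⁻¹/Real.log 2
                + (((4:ℝ)^m)⁻¹/24/Real.log 2 + (((4:ℝ)^m)⁻¹/108/Real.log 2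
                  + ((4:ℝ)^m)⁻¹*(1/16)/Real.log 2*(1/3)))
              = 6/5*(goldenRatio^(2*(m+2)))⁻¹/Real.log 2 + ((4:ℝ)^m)⁻¹/24/Real.log 2
                + ((4:ℝ)^m)⁻¹/108/Real.log 2 + ((4:ℝ)^m)⁻¹*(1/16)*(1/3)/Real.log 2 := by
                ring
            _ ≤ _ := hfr
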